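/- Let N ≥ 3 be an integer, R > 0, 1 < q < 2; suppose f satisfies (F1)–(F3) and b satisfies (B). Then there exist λ*(R) > 0 and ρ₊(R) > 0 such that for every λ ∈ (0, λ*(R)): I_λ^+(u) ≥ ρ₊(R)²/8 for every u ∈ 𝒜 with ‖u‖ = ρ₊(R); moreover there exists ρ₋(λ,R) ∈ (0, ρ₊(R)) such that I_λ^+(u) ≥ ρ₋(λ,R)²/8 for every u with ρ₋(λ,R) ≤ ‖u‖ ≤ ρ₊(R), and ρ₋(λ,R) → 0 as λ → 0. The same statements hold for I_λ^−. -/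

import Mathlib

open MeasureTheory Set Filter
open scoped Classical

noncomputable section

/-- The space 𝒜 of functions `u ∈ W^{1,1}_loc((0,R])` (modelled here by functions that are
differentiable on `(0,R]` with derivative `d`) such that `∫₀^R r^{N-1} |u'|² dr < ∞`
and `u(R) = 0`. -/
structure SpaceA (N : ℕ) (R : ℝ) where
  u : ℝ → ℝ
  d : ℝ → ℝ
  hasDeriv : ∀ r ∈ Set.Ioc (0 : ℝ) R, HasDerivAt u (d r) r
  sq_integrable : MeasureTheory.IntegrableOn (fun r : ℝ => r ^ (N - 1) * d r ^ 2) (Set.Ioo 0 R)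
  boundary : u R = 0

namespace SpaceA

variable {N : ℕ} {R : ℝ}

/-- Membership in `K = {u ∈ 𝒜 : ‖u'‖_∞ ≤ 1}`. -/
def inK (w : SpaceA N R) : Prop := ∀ r ∈ Set.Ioo (0 : ℝ) R, |w.d r| ≤ 1

/-- `‖u‖² = ∫₀^R r^{N-1}|u'|² dr`. -/
def normSq (w : SpaceA N R) : ℝ := ∫ r in Set.Ioo (0 : ℝ) R, r ^ (N - 1) * w.d r ^ 2

/-- The distance in `𝒜`. -/
def distA (w v : SpaceA N R) : ℝ :=
  Real.sqrt (∫ r in Set.Ioo (0 : ℝ) R, r ^ (N - 1) * (w.d r - v.d r) ^ 2)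

/-- The (real-valued) functional `Ψ(u) = ∫₀^R r^{N-1}(1 - √(1-|u'|²)) dr` (used on `K`). -/
def PsiR (w : SpaceA N R) : ℝ :=
  ∫ r in Set.Ioo (0 : ℝ) R, r ^ (N - 1) * (1 - Real.sqrt (1 - w.d r ^ 2))

/-- The extended-real-valued functional `Ψ`, equal to `+∞` off `K`. -/
def PsiE (w : SpaceA N R) : EReal := if w.inK then ((w.PsiR : ℝ) : EReal) else ⊤

def isPos (w : SpaceA N R) : Prop := ∀ r ∈ Set.Ioo (0 : ℝ) R, 0 < w.u r

def isNeg (w : SpaceA N R) : Prop := ∀ r ∈ Set.Ioo (0 : ℝ) R, w.u r < 0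

end SpaceA

variable {N : ℕ} {R : ℝ}

/-- `F(r,s) = ∫₀ˢ f(r,t) dt`. -/
def Fint (f : ℝ → ℝ → ℝ) (r s : ℝ) : ℝ := ∫ t in (0 : ℝ)..s, f r t

/-- (F1) continuity of `f`. -/
def hypF1 (R : ℝ) (f : ℝ → ℝ → ℝ) : Prop :=
  ContinuousOn (fun p : ℝ × ℝ => f p.1 p.2) (Set.Icc 0 R ×ˢ Set.Icc (-R) R)

/-- (F2) `f(r,s)/s → 0` as `s → 0`, uniformly in `r`. -/
def hypF2 (R : ℝ) (f : ℝ → ℝ → ℝ) : Prop :=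
  ∀ ε > (0 : ℝ), ∃ δ > (0 : ℝ), ∀ r ∈ Set.Icc (0 : ℝ) R, ∀ s : ℝ, s ≠ 0 → |s| < δ →
    |f r s / s| < ε

/-- (F3) sign condition. -/
def hypF3 (R : ℝ) (f : ℝ → ℝ → ℝ) : Prop :=
  ∀ r ∈ Set.Icc (0 : ℝ) R, ∀ s : ℝ, s ≠ 0 → |s| ≤ R → 0 < s * f r s

/-- (F4) superlinearity with the quantitative bound. -/
def hypF4 (N : ℕ) (R : ℝ) (f : ℝ → ℝ → ℝ) : Prop :=
  ∃ θ : ℝ, 2 < θ ∧ ∃ a₁ : ℝ, 0 < a₁ ∧ ∃ a₂ : ℝ, 0 ≤ a₂ ∧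
    (∀ r ∈ Set.Icc (0 : ℝ) R, ∀ s ∈ Set.Icc (-R) R, a₁ * |s| ^ θ - a₂ ≤ Fint f r s) ∧
    (1 + a₂) / (N : ℝ) -
        a₁ * R ^ θ *
          (Real.Gamma (N : ℝ) * Real.Gamma (θ + 1) / Real.Gamma ((N : ℝ) + θ + 1)) ≤ -1

/-- (F5) quasi-evenness of `F` near `0`. -/
def hypF5 (R : ℝ) (f : ℝ → ℝ → ℝ) : Prop :=
  ∃ σ : ℝ, 0 < σ ∧ ∃ θb : ℝ, 4 < θb ∧
    ∀ r ∈ Set.Icc (0 : ℝ) R, ∀ s ∈ Set.Icc (-σ) σ,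
      |Fint f r (-s) - Fint f r s| ≤ |s| ^ θb

/-- (F6) `f ∈ C¹` together with a growth bound on `∂ₛf` near `s = 0`. -/
def hypF6 (R : ℝ) (f : ℝ → ℝ → ℝ) : Prop :=
  ContDiffOn ℝ 1 (fun p : ℝ × ℝ => f p.1 p.2) (Set.Icc 0 R ×ˢ Set.Icc (-R) R) ∧
  ∃ σ : ℝ, 0 < σ ∧ ∃ θt : ℝ, 2 < θt ∧ ∃ c : ℝ, 0 < c ∧
    ∀ r ∈ Set.Icc (0 : ℝ) R, ∀ s ∈ Set.Icc (-σ) σ,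
      |deriv (fun t => f r t) s| ≤ c * |s| ^ (θt - 2)

/-- (B) the weight `b` is continuous and pinched between positive constants. -/
def hypB (R : ℝ) (b : ℝ → ℝ) : Prop :=
  ContinuousOn b (Set.Icc 0 R) ∧
    ∃ b₀ b₁ : ℝ, 0 < b₀ ∧ ∀ r ∈ Set.Icc (0 : ℝ) R, b₀ ≤ b r ∧ b r ≤ b₁

/-- A weak solution of problem (BP). -/
def isWeakSol (q lam : ℝ) (b : ℝ → ℝ) (f : ℝ → ℝ → ℝ) (w : SpaceA N R) : Prop :=
  w.inK ∧ ∀ φ : SpaceA N R, φ.inK →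
    (∫ r in Set.Ioo (0 : ℝ) R, r ^ (N - 1) * w.d r * φ.d r / Real.sqrt (1 - w.d r ^ 2)) =
      ∫ r in Set.Ioo (0 : ℝ) R,
        r ^ (N - 1) * (lam * b r * |w.u r| ^ (q - 2) * w.u r + f r (w.u r)) * φ.u r

/-- The truncation `f⁺`. -/
def fplus (R : ℝ) (f : ℝ → ℝ → ℝ) (r s : ℝ) : ℝ :=
  if s < 0 then 0
  else if s ≤ R then f r s
  else if s < R + 1 then -(f r R) * (s - R - 1)
  else 0

/-- The truncation `f⁻`. -/
def fminus (R : ℝ) (f : ℝ → ℝ → ℝ) (r s : ℝ) : ℝ :=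
  if 0 < s then 0
  else if -R ≤ s then f r s
  else if -R - 1 < s then f r (-R) * (s + R + 1)
  else 0

/-- The extension `f̂` (equal to `f` for `|s| ≤ R`, linear for `R < |s| < R+1`, `0` beyond). -/
def fhat (R : ℝ) (f : ℝ → ℝ → ℝ) (r s : ℝ) : ℝ :=
  if |s| ≤ R then f r s
  else if R < s ∧ s < R + 1 then f r R * (R + 1 - s)
  else if -(R + 1) < s ∧ s < -R then f r (-R) * (s + R + 1)
  else 0

/-- A weak solution of the modified problem (BP⁺). -/
def isWeakSolPlus (q lam : ℝ) (b : ℝ → ℝ) (f : ℝ → ℝ → ℝ) (w : SpaceA N R) : Prop :=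
  w.inK ∧ ∀ φ : SpaceA N R, φ.inK →
    (∫ r in Set.Ioo (0 : ℝ) R, r ^ (N - 1) * w.d r * φ.d r / Real.sqrt (1 - w.d r ^ 2)) =
      ∫ r in Set.Ioo (0 : ℝ) R,
        r ^ (N - 1) *
          (lam * b r * |w.u r| ^ (q - 2) * max (w.u r) 0 + fplus R f r (w.u r)) * φ.u r

/-- A weak solution of the modified problem (BP⁻). -/
def isWeakSolMinus (q lam : ℝ) (b : ℝ → ℝ) (f : ℝ → ℝ → ℝ) (w : SpaceA N R) : Prop :=
  w.inK ∧ ∀ φ : SpaceA N R, φ.inK →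
    (∫ r in Set.Ioo (0 : ℝ) R, r ^ (N - 1) * w.d r * φ.d r / Real.sqrt (1 - w.d r ^ 2)) =
      ∫ r in Set.Ioo (0 : ℝ) R,
        r ^ (N - 1) *
          (-(lam * b r * |w.u r| ^ (q - 2) * max (-w.u r) 0) + fminus R f r (w.u r)) * φ.u r

/-- The pairing `⟨(F_λ⁺)'(u), z⟩`. -/
def FDplus (q lam : ℝ) (b : ℝ → ℝ) (f : ℝ → ℝ → ℝ) (w : SpaceA N R) (z : ℝ → ℝ) : ℝ :=
  -lam * (∫ r in Set.Ioo (0 : ℝ) R,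
      r ^ (N - 1) * b r * |max (w.u r) 0| ^ (q - 2) * max (w.u r) 0 * z r)
    - ∫ r in Set.Ioo (0 : ℝ) R, r ^ (N - 1) * fplus R f r (w.u r) * z r

/-- The pairing `⟨(F_λ⁻)'(u), z⟩`. -/
def FDminus (q lam : ℝ) (b : ℝ → ℝ) (f : ℝ → ℝ → ℝ) (w : SpaceA N R) (z : ℝ → ℝ) : ℝ :=
  -lam * (∫ r in Set.Ioo (0 : ℝ) R,
      r ^ (N - 1) * b r * |max (-w.u r) 0| ^ (q - 2) * max (-w.u r) 0 * z r)
    - ∫ r in Set.Ioo (0 : ℝ) R, r ^ (N - 1) * fminus R f r (w.u r) * z r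

/-- Critical point of `I_λ⁺ = Ψ + F_λ⁺` in the sense of Szulkin. -/
def isCritPlus (q lam : ℝ) (b : ℝ → ℝ) (f : ℝ → ℝ → ℝ) (w : SpaceA N R) : Prop :=
  w.inK ∧ ∀ v : SpaceA N R, v.inK →
    0 ≤ FDplus q lam b f w (fun r => v.u r - w.u r) + v.PsiR - w.PsiR

/-- Critical point of `I_λ⁻ = Ψ + F_λ⁻` in the sense of Szulkin. -/
def isCritMinus (q lam : ℝ) (b : ℝ → ℝ) (f : ℝ → ℝ → ℝ) (w : SpaceA N R) : Prop :=
  w.inK ∧ ∀ v : SpaceA N R, v.inK →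
    0 ≤ FDminus q lam b f w (fun r => v.u r - w.u r) + v.PsiR - w.PsiR

/-- The functional `I_λ⁺` (its real-valued expression, valid on `K`). -/
def IlamPlus (q lam : ℝ) (b : ℝ → ℝ) (f : ℝ → ℝ → ℝ) (w : SpaceA N R) : ℝ :=
  w.PsiR - (lam / q) * (∫ r in Set.Ioo (0 : ℝ) R, r ^ (N - 1) * b r * |max (w.u r) 0| ^ q)
    - ∫ r in Set.Ioo (0 : ℝ) R, r ^ (N - 1) * Fint (fplus R f) r (w.u r)

/-- The functional `I_λ⁻` (its real-valued expression, valid on `K`). -/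
def IlamMinus (q lam : ℝ) (b : ℝ → ℝ) (f : ℝ → ℝ → ℝ) (w : SpaceA N R) : ℝ :=
  w.PsiR - (lam / q) * (∫ r in Set.Ioo (0 : ℝ) R, r ^ (N - 1) * b r * |max (-w.u r) 0| ^ q)
    - ∫ r in Set.Ioo (0 : ℝ) R, r ^ (N - 1) * Fint (fminus R f) r (w.u r)

/-- The full functional `I_λ` (its real-valued expression, valid on `K`), with `F` the
primitive of the extension `f̂`. -/
def IlamFull (q lam : ℝ) (b : ℝ → ℝ) (f : ℝ → ℝ → ℝ) (w : SpaceA N R) : ℝ :=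
  w.PsiR - (lam / q) * (∫ r in Set.Ioo (0 : ℝ) R, r ^ (N - 1) * b r * |w.u r| ^ q)
    - ∫ r in Set.Ioo (0 : ℝ) R, r ^ (N - 1) * Fint (fhat R f) r (w.u r)

/-- The functional `I_λ` with `F` the primitive of `f` itself. -/
def Ilam (q lam : ℝ) (b : ℝ → ℝ) (f : ℝ → ℝ → ℝ) (w : SpaceA N R) : ℝ :=
  w.PsiR - (lam / q) * (∫ r in Set.Ioo (0 : ℝ) R, r ^ (N - 1) * b r * |w.u r| ^ q)
    - ∫ r in Set.Ioo (0 : ℝ) R, r ^ (N - 1) * Fint f r (w.u r)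

namespace MPGaux

variable {N : ℕ} {R : ℝ}

lemma d_eq_deriv (w : SpaceA N R) {r : ℝ} (hr : r ∈ Set.Ioc 0 R) : w.d r = deriv w.u r :=
  ((w.hasDeriv r hr).deriv).symm

lemma d_aesm (w : SpaceA N R) {s : Set ℝ} (hs : s ⊆ Set.Ioc 0 R) (hms : MeasurableSet s) :
    AEStronglyMeasurable w.d (volume.restrict s) := by
  refine ((measurable_deriv w.u).aestronglyMeasurable).congr ?_
  rw [Filter.EventuallyEq, ae_restrict_iff' hms]
  exact Filter.Eventually.of_forall fun r hr => (d_eq_deriv w (hs hr)).symm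

lemma ae_ne (c : ℝ) (μ : MeasureTheory.Measure ℝ) [MeasureTheory.NullSingletonClass μ] :
    ∀ᵐ t ∂μ, t ≠ c := by
  rw [MeasureTheory.ae_iff]
  simpa using measure_singleton c

lemma d_intOn (w : SpaceA N R) (hK : w.inK) {r : ℝ} (hr0 : 0 < r) (hrR : r ≤ R) :
    MeasureTheory.IntegrableOn w.d (Set.Ioc r R) := by
  have hsub : Set.Ioc r R ⊆ Set.Ioc 0 R := Set.Ioc_subset_Ioc hr0.le le_rfl
  refine (MeasureTheory.integrable_const 1).mono' (d_aesm w hsub measurableSet_Ioc) ?_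
  filter_upwards [MeasureTheory.ae_restrict_mem measurableSet_Ioc,
    MeasureTheory.ae_restrict_of_ae (ae_ne R _)] with t ht htne
  have htIoo : t ∈ Set.Ioo (0 : ℝ) R := ⟨hr0.trans ht.1, lt_of_le_of_ne ht.2 htne⟩
  simpa [Real.norm_eq_abs] using hK t htIoo

lemma u_eq (w : SpaceA N R) (hK : w.inK) {r : ℝ} (hr : r ∈ Set.Ioo 0 R) :
    w.u r = -∫ t in r..R, w.d t := by
  have h := intervalIntegral.integral_eq_sub_of_hasDerivAt (f := w.u) (f' := w.d)
    (a := r) (b := R) ?_ ?_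
  · rw [h, w.boundary]; ring
  · intro t ht
    rw [Set.uIcc_of_le hr.2.le] at ht
    exact w.hasDeriv t ⟨hr.1.trans_le ht.1, ht.2⟩
  · rw [intervalIntegrable_iff, Set.uIoc_of_le hr.2.le]
    exact d_intOn w hK hr.1 hr.2.le

lemma abs_u_le_integral (w : SpaceA N R) (hK : w.inK) {r : ℝ} (hr : r ∈ Set.Ioo 0 R)
    {g : ℝ → ℝ} (hg : MeasureTheory.IntegrableOn g (Set.Ioo r R))
    (hbound : ∀ t ∈ Set.Ioo r R, |w.d t| ≤ g t) :
    |w.u r| ≤ ∫ t in Set.Ioo r R, g t := by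
  rw [u_eq w hK hr, abs_neg, intervalIntegral.integral_of_le hr.2.le,
    MeasureTheory.integral_Ioc_eq_integral_Ioo]
  rw [← Real.norm_eq_abs]
  refine MeasureTheory.norm_integral_le_of_norm_le hg ?_
  filter_upwards [MeasureTheory.ae_restrict_mem measurableSet_Ioo] with t ht
  simpa [Real.norm_eq_abs] using hbound t ht

lemma abs_u_le_R (w : SpaceA N R) (hK : w.inK) {r : ℝ} (hr : r ∈ Set.Ioo 0 R) :
    |w.u r| ≤ R := by
  have h := abs_u_le_integral w hK hr (g := fun _ => 1)
    (MeasureTheory.integrableOn_const measure_Ioo_lt_top.ne)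
    (fun t ht => hK t ⟨hr.1.trans ht.1, ht.2⟩)
  have h2 : ∫ _ in Set.Ioo r R, (1 : ℝ) = R - r := by
    simp [Real.volume_Ioo, ENNReal.toReal_ofReal (sub_nonneg.mpr hr.2.le), hr.2.le]
  rw [h2] at h
  linarith [hr.1]

open intervalIntegral in
lemma integral_inv_pow (hN : 3 ≤ N) {r : ℝ} (hr : 0 < r) (hrR : r ≤ R) :
    ∫ t in Set.Ioo r R, ((t ^ (N - 1))⁻¹ : ℝ) ≤ 1 / ((((N : ℝ)) - 2) * r ^ (N - 2)) := by
  have hm : (1 : ℕ) ≤ N - 2 := by omega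
  have h1 : (∫ t in Set.Ioo r R, ((t ^ (N - 1))⁻¹ : ℝ))
      = ∫ t in r..R, (t : ℝ) ^ (-((N : ℤ) - 1)) := by
    rw [intervalIntegral.integral_of_le hrR, ← MeasureTheory.integral_Ioc_eq_integral_Ioo]
    refine MeasureTheory.setIntegral_congr_fun measurableSet_Ioc fun t _ => ?_
    rw [zpow_neg]
    congr 1
    rw [show ((N : ℤ) - 1) = ((N - 1 : ℕ) : ℤ) by omega, zpow_natCast]
  have hnotin : (0 : ℝ) ∉ Set.uIcc r R := by
    rw [Set.uIcc_of_le hrR]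
    exact fun h => absurd h.1 (not_le.mpr hr)
  rw [h1, show (∫ t in r..R, (t:ℝ) ^ (-((N : ℤ) - 1))) = ((R ^ (-((N:ℤ)-1) + 1) - r ^ (-((N:ℤ)-1) + 1)) / (((-((N:ℤ)-1) : ℤ) : ℝ) + 1)) from integral_zpow (Or.inr ⟨by omega, hnotin⟩)]
  have he : -((N : ℤ) - 1) + 1 = -((N - 2 : ℕ) : ℤ) := by omega
  rw [he]
  have hz : ∀ x : ℝ, x ^ (-((N - 2 : ℕ) : ℤ)) = (x ^ (N - 2))⁻¹ := fun x => by
    rw [zpow_neg, zpow_natCast]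
  rw [hz, hz]
  have hN2 : (0 : ℝ) < (N : ℝ) - 2 := by
    have : (3 : ℝ) ≤ (N : ℝ) := by exact_mod_cast hN
    linarith
  have hcast : ((-((N : ℤ) - 1) : ℤ) : ℝ) + 1 = -(((N : ℝ)) - 2) := by
    push_cast
    ring
  rw [hcast]
  have hrp : (0 : ℝ) < r ^ (N - 2) := pow_pos hr _
  have hRpow : (0 : ℝ) < R ^ (N - 2) := pow_pos (hr.trans_le hrR) _
  have hflip : ((R ^ (N - 2))⁻¹ - (r ^ (N - 2))⁻¹) / (-(((N : ℝ)) - 2))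
      = ((r ^ (N - 2))⁻¹ - (R ^ (N - 2))⁻¹) / (((N : ℝ)) - 2) := by
    rw [div_neg, ← neg_div, neg_sub]
  rw [hflip, div_le_div_iff₀ hN2 (by positivity)]
  have h1 : (r ^ (N - 2))⁻¹ * r ^ (N - 2) = 1 := inv_mul_cancel₀ hrp.ne'
  have h2 : 0 ≤ (R ^ (N - 2))⁻¹ * r ^ (N - 2) := by positivity
  nlinarith

lemma normSq_nonneg (w : SpaceA N R) : 0 ≤ w.normSq :=
  MeasureTheory.setIntegral_nonneg measurableSet_Ioo fun r hr =>
    mul_nonneg (pow_nonneg hr.1.le _) (sq_nonneg _)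

lemma abs_u_le_c (hN : 3 ≤ N) (w : SpaceA N R) (hK : w.inK) {r : ℝ} (hr : r ∈ Set.Ioo 0 R)
    {c : ℝ} (hc : 0 < c) :
    |w.u r| ≤ w.normSq / (2 * c) + c / (2 * ((((N : ℝ)) - 2) * r ^ (N - 2))) := by
  have hrpos := hr.1
  have hN2 : (0 : ℝ) < (N : ℝ) - 2 := by
    have : (3 : ℝ) ≤ (N : ℝ) := by exact_mod_cast hN
    linarith
  have hrp : (0 : ℝ) < r ^ (N - 2) := pow_pos hrpos _
  have hint1 : MeasureTheory.IntegrableOn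
      (fun t => t ^ (N - 1) * w.d t ^ 2 / (2 * c)) (Set.Ioo r R) :=
    (w.sq_integrable.mono_set (Set.Ioo_subset_Ioo hrpos.le le_rfl)).div_const _
  have hint2 : MeasureTheory.IntegrableOn
      (fun t => c * (t ^ (N - 1))⁻¹ / 2) (Set.Ioo r R) := by
    refine ((ContinuousOn.integrableOn_Icc ?_).mono_set Set.Ioo_subset_Icc_self)
    refine ContinuousOn.div_const (ContinuousOn.mul continuousOn_const ?_) _
    refine ContinuousOn.inv₀ (continuousOn_pow _) fun t ht => ?_
    exact pow_ne_zero _ (hrpos.trans_le ht.1).ne'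
  refine le_trans (abs_u_le_integral w hK hr
    (g := fun t => t ^ (N - 1) * w.d t ^ 2 / (2 * c) + c * (t ^ (N - 1))⁻¹ / 2) ?_ ?_) ?_
  · exact hint1.add hint2
  · -- pointwise |d t| ≤ ...
    intro t ht
    have ht0 : 0 < t := hrpos.trans ht.1
    have hP : (0 : ℝ) < t ^ (N - 1) := pow_pos ht0 _
    have habs : |w.d t| ≤ 1 := hK t ⟨ht0, ht.2⟩
    have habs2 : |w.d t| ^ 2 = w.d t ^ 2 := sq_abs _
    show |w.d t| ≤ t ^ (N - 1) * w.d t ^ 2 / (2 * c) + c * (t ^ (N - 1))⁻¹ / 2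
    have hsq := sq_nonneg (t ^ (N - 1) * |w.d t| - c)
    rw [div_add_div _ _ (by positivity : (2 : ℝ) * c ≠ 0) (two_ne_zero),
      le_div_iff₀ (by positivity), ← mul_le_mul_iff_left₀ hP]
    have key2 : (t ^ (N - 1) * w.d t ^ 2 * 2 + 2 * c * (c * (t ^ (N - 1))⁻¹)) * t ^ (N - 1)
        = 2 * (t ^ (N - 1)) ^ 2 * w.d t ^ 2 + 2 * c ^ 2 := by
      field_simp
    rw [key2]
    nlinarith [habs2, hsq]
  · rw [MeasureTheory.integral_add hint1 hint2]
    have hb1 : (∫ t in Set.Ioo r R, t ^ (N - 1) * w.d t ^ 2 / (2 * c))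
        ≤ w.normSq / (2 * c) := by
      rw [MeasureTheory.integral_div]
      refine div_le_div_of_nonneg_right ?_ (by positivity)
      refine MeasureTheory.setIntegral_mono_set w.sq_integrable ?_ ?_
      · filter_upwards [MeasureTheory.ae_restrict_mem measurableSet_Ioo] with t ht
        exact mul_nonneg (pow_nonneg ht.1.le _) (sq_nonneg _)
      · exact (Set.Ioo_subset_Ioo hrpos.le le_rfl).eventuallyLE
    have hb2 : (∫ t in Set.Ioo r R, c * (t ^ (N - 1))⁻¹ / 2)
        ≤ c / (2 * ((((N : ℝ)) - 2) * r ^ (N - 2))) := by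
      have hip := integral_inv_pow (R := R) hN hrpos hr.2.le
      have heq : (∫ t in Set.Ioo r R, c * (t ^ (N - 1))⁻¹ / 2)
          = (c / 2) * ∫ t in Set.Ioo r R, ((t ^ (N - 1))⁻¹ : ℝ) := by
        rw [← MeasureTheory.integral_const_mul]
        congr 1; funext t; ring
      rw [heq]
      calc (c / 2) * ∫ t in Set.Ioo r R, ((t ^ (N - 1))⁻¹ : ℝ)
          ≤ (c / 2) * (1 / ((((N : ℝ)) - 2) * r ^ (N - 2))) :=
            mul_le_mul_of_nonneg_left hip (by positivity)
        _ = c / (2 * ((((N : ℝ)) - 2) * r ^ (N - 2))) := by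
            field_simp
    linarith

lemma psi_integrand_bounds {x : ℝ} (hx : |x| ≤ 1) :
    x ^ 2 / 2 ≤ 1 - Real.sqrt (1 - x ^ 2) ∧ 1 - Real.sqrt (1 - x ^ 2) ≤ x ^ 2 := by
  have hx2 : x ^ 2 ≤ 1 := by nlinarith [sq_abs x, abs_nonneg x]
  constructor
  · have h1 : Real.sqrt (1 - x ^ 2) ≤ 1 - x ^ 2 / 2 := by
      have := Real.sqrt_le_sqrt (show 1 - x ^ 2 ≤ (1 - x ^ 2 / 2) ^ 2 by nlinarith)
      rwa [Real.sqrt_sq (by nlinarith)] at this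
    linarith
  · have h0 : 0 ≤ 1 - x ^ 2 := by linarith
    have hs := Real.sq_sqrt h0
    have hs0 := Real.sqrt_nonneg (1 - x ^ 2)
    have hs1 : Real.sqrt (1 - x ^ 2) ≤ 1 := by
      nlinarith
    nlinarith

lemma psi_integrable (w : SpaceA N R) (hK : w.inK) :
    MeasureTheory.IntegrableOn
      (fun r => r ^ (N - 1) * (1 - Real.sqrt (1 - w.d r ^ 2))) (Set.Ioo 0 R) := by
  have hd := d_aesm w Set.Ioo_subset_Ioc_self measurableSet_Ioo
  have hm : AEStronglyMeasurable
      (fun r => r ^ (N - 1) * (1 - Real.sqrt (1 - w.d r ^ 2)))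
      (MeasureTheory.volume.restrict (Set.Ioo 0 R)) := by
    refine AEStronglyMeasurable.mul ?_ ?_
    · exact (measurable_id.pow_const _).aestronglyMeasurable
    · refine aestronglyMeasurable_const.sub ?_
      refine Real.continuous_sqrt.comp_aestronglyMeasurable ?_
      refine aestronglyMeasurable_const.sub ?_
      exact (hd.mul hd).congr (Filter.Eventually.of_forall fun r => by simp [sq])
  refine w.sq_integrable.mono' hm ?_
  filter_upwards [MeasureTheory.ae_restrict_mem measurableSet_Ioo] with r hr
  have hb := psi_integrand_bounds (hK r hr)
  have h1 : (0:ℝ) ≤ r ^ (N - 1) := pow_nonneg hr.1.le _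
  rw [Real.norm_eq_abs, abs_mul, abs_of_nonneg h1, abs_of_nonneg (by nlinarith [hb.1, sq_nonneg (w.d r)] : (0:ℝ) ≤ 1 - Real.sqrt (1 - w.d r ^ 2))]
  exact mul_le_mul_of_nonneg_left hb.2 h1

lemma psiR_ge (w : SpaceA N R) (hK : w.inK) : w.normSq / 2 ≤ w.PsiR := by
  have h : w.normSq / 2 = ∫ r in Set.Ioo (0:ℝ) R, r ^ (N - 1) * w.d r ^ 2 / 2 := by
    rw [SpaceA.normSq, MeasureTheory.integral_div]
  rw [h, SpaceA.PsiR]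
  refine MeasureTheory.setIntegral_mono_on (w.sq_integrable.div_const _)
    (psi_integrable w hK) measurableSet_Ioo fun r hr => ?_
  have hb := psi_integrand_bounds (hK r hr)
  have h1 : (0:ℝ) ≤ r ^ (N - 1) := pow_nonneg hr.1.le _
  calc r ^ (N - 1) * w.d r ^ 2 / 2 = r ^ (N - 1) * (w.d r ^ 2 / 2) := by ring
    _ ≤ r ^ (N - 1) * (1 - Real.sqrt (1 - w.d r ^ 2)) :=
        mul_le_mul_of_nonneg_left hb.1 h1

section FintLemmas

variable {f : ℝ → ℝ → ℝ}

lemma Fint_plus_eq {r s : ℝ} (h0 : 0 ≤ s) (hsR : s ≤ R) :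
    Fint (fplus R f) r s = ∫ t in (0:ℝ)..s, f r t := by
  refine intervalIntegral.integral_congr fun t ht => ?_
  rw [Set.uIcc_of_le h0] at ht
  simp only [fplus, if_neg (not_lt.mpr ht.1), if_pos (ht.2.trans hsR)]

lemma Fint_plus_nonpos {r s : ℝ} (hs : s ≤ 0) : Fint (fplus R f) r s = 0 := by
  rw [show (0:ℝ) = ∫ t in (0:ℝ)..s, (0:ℝ) by simp]
  refine intervalIntegral.integral_congr_ae ?_
  filter_upwards [ae_ne (0:ℝ) MeasureTheory.volume] with t ht0 ht
  rw [Set.uIoc_comm, Set.uIoc_of_le hs] at ht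
  have : t < 0 := lt_of_le_of_ne ht.2 ht0
  simp only [fplus, if_pos this]

lemma Fint_minus_eq {r s : ℝ} (h0 : s ≤ 0) (hsR : -R ≤ s) :
    Fint (fminus R f) r s = ∫ t in (0:ℝ)..s, f r t := by
  refine intervalIntegral.integral_congr fun t ht => ?_
  rw [Set.uIcc_comm, Set.uIcc_of_le h0] at ht
  simp only [fminus, if_neg (not_lt.mpr ht.2), if_pos (hsR.trans ht.1)]

lemma Fint_minus_nonneg {r s : ℝ} (hs : 0 ≤ s) : Fint (fminus R f) r s = 0 := by
  rw [show (0:ℝ) = ∫ t in (0:ℝ)..s, (0:ℝ) by simp]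
  refine intervalIntegral.integral_congr_ae (Filter.Eventually.of_forall fun t ht => ?_)
  rw [Set.uIoc_of_le hs] at ht
  simp only [fminus, if_pos ht.1]

lemma abs_intf_le_const {M₀ : ℝ} {r s : ℝ} (hM0 : 0 ≤ M₀) (hR : 0 < R)
    (hM : ∀ t ∈ Set.Icc (-R) R, |f r t| ≤ M₀) (hs : |s| ≤ R) :
    |∫ t in (0:ℝ)..s, f r t| ≤ M₀ * R := by
  have h := intervalIntegral.norm_integral_le_of_norm_le_const (C := M₀)
    (f := f r) (a := 0) (b := s) ?_
  · rw [Real.norm_eq_abs] at h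
    refine h.trans ?_
    have : |s - 0| ≤ R := by simpa using hs
    exact mul_le_mul_of_nonneg_left this hM0
  · intro t ht
    have hmem : t ∈ Set.Icc (-R) R := by
      rcases le_or_gt 0 s with h0 | h0
      · rw [Set.uIoc_of_le h0] at ht
        have hsR : s ≤ R := by rw [abs_of_nonneg h0] at hs; exact hs
        exact ⟨by linarith [ht.1], ht.2.trans hsR⟩
      · rw [Set.uIoc_comm, Set.uIoc_of_le h0.le] at ht
        constructor
        · have : -R ≤ s := neg_le_of_abs_le hs
          linarith [ht.1]
        · linarith [ht.2, hR]
    rw [Real.norm_eq_abs]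
    exact hM t hmem

lemma abs_intf_le_sq {ε δ : ℝ} {r s : ℝ} (hε : 0 ≤ ε)
    (hf2 : ∀ t : ℝ, t ≠ 0 → |t| < δ → |f r t| ≤ ε * |t|) (hs : |s| ≤ δ) :
    |∫ t in (0:ℝ)..s, f r t| ≤ ε * s ^ 2 := by
  have h := intervalIntegral.norm_integral_le_abs_of_norm_le
    (g := fun _ => ε * |s|) (f := f r) (a := 0) (b := s) (μ := MeasureTheory.volume) ?_
    (intervalIntegrable_const)
  · rw [Real.norm_eq_abs, intervalIntegral.integral_const, smul_eq_mul] at h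
    refine h.trans ?_
    rw [abs_mul, sub_zero, abs_mul, abs_of_nonneg hε, abs_abs]
    refine le_of_eq ?_
    rw [← sq_abs s]
    ring
  · filter_upwards [MeasureTheory.ae_restrict_of_ae (ae_ne (0:ℝ) _),
      MeasureTheory.ae_restrict_of_ae (ae_ne s MeasureTheory.volume),
      MeasureTheory.ae_restrict_mem measurableSet_uIoc] with t ht0 hts ht
    have habs : |t| < |s| ∨ (|t| ≤ |s| ∧ t ≠ 0 ∧ |t| < δ) := by
      rcases le_or_gt 0 s with h0 | h0
      · rw [Set.uIoc_of_le h0] at ht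
        left
        rw [abs_of_pos ht.1, abs_of_nonneg h0]
        exact lt_of_le_of_ne ht.2 hts
      · rw [Set.uIoc_comm, Set.uIoc_of_le h0.le] at ht
        left
        rw [abs_of_neg (lt_of_le_of_ne ht.2 ht0), abs_of_neg h0]
        have := lt_of_le_of_ne (le_of_lt ht.1) (Ne.symm hts)
        linarith [ht.1, hts]
    have htlt : |t| < δ := by
      rcases habs with h | h
      · exact h.trans_le hs
      · exact h.2.2
    have h1 : |f r t| ≤ ε * |t| := hf2 t ht0 htlt
    have h2 : |t| ≤ |s| := by
      rcases habs with h | h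
      · exact h.le
      · exact h.1
    rw [Real.norm_eq_abs]
    exact h1.trans (mul_le_mul_of_nonneg_left h2 hε)

end FintLemmas

open intervalIntegral in
lemma integral_Ioo_id {a : ℝ} (ha : 0 ≤ a) : ∫ r in Set.Ioo (0:ℝ) a, r = a ^ 2 / 2 := by
  rw [← MeasureTheory.integral_Ioc_eq_integral_Ioo, ← intervalIntegral.integral_of_le ha,
    integral_id]
  norm_num

lemma FT_bound (hN : 3 ≤ N) (hR : 0 < R) {Φ : ℝ → ℝ → ℝ} {M' δ : ℝ}
    (hM' : 0 < M') (hδ : 0 < δ)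
    (H1 : ∀ r ∈ Set.Icc (0:ℝ) R, ∀ s : ℝ, |s| ≤ R → |Φ r s| ≤ M' * R)
    (H2 : ∀ r ∈ Set.Icc (0:ℝ) R, ∀ s : ℝ, |s| ≤ R → |s| ≤ δ →
      |Φ r s| ≤ ((((N:ℝ)) - 2) / (8 * R ^ 2)) * s ^ 2)
    (w : SpaceA N R) (hK : w.inK)
    (hρ : 0 < Real.sqrt w.normSq)
    (hρp : Real.sqrt w.normSq ≤ Real.sqrt (δ ^ 2 * (((N:ℝ)) - 2) *
      (Real.sqrt (δ ^ 2 * (((N:ℝ)) - 2) / (8 * M' * R))) ^ (N - 2))) :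
    (∫ r in Set.Ioo (0:ℝ) R, r ^ (N - 1) * Φ r (w.u r)) ≤ w.normSq / 8 := by
  have hN2 : (0 : ℝ) < (N : ℝ) - 2 := by
    have : (3 : ℝ) ≤ (N : ℝ) := by exact_mod_cast hN
    linarith
  set ε : ℝ := (((N:ℝ)) - 2) / (8 * R ^ 2) with hεdef
  have hε : 0 < ε := by positivity
  set t₀ : ℝ := Real.sqrt (δ ^ 2 * (((N:ℝ)) - 2) / (8 * M' * R)) with ht₀def
  have ht₀ : 0 < t₀ := Real.sqrt_pos.mpr (by positivity)
  have ht₀sq : t₀ ^ 2 = δ ^ 2 * (((N:ℝ)) - 2) / (8 * M' * R) :=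
    Real.sq_sqrt (by positivity)
  have hnorm : 0 < w.normSq := Real.sqrt_pos.mp hρ
  have hKbound : w.normSq ≤ δ ^ 2 * (((N:ℝ)) - 2) * t₀ ^ (N - 2) := by
    have h2 := pow_le_pow_left₀ (Real.sqrt_nonneg w.normSq) hρp 2
    rwa [Real.sq_sqrt hnorm.le, Real.sq_sqrt (by positivity)] at h2
  set Kc : ℝ := w.normSq / (δ ^ 2 * (((N:ℝ)) - 2)) with hKcdef
  have hKc : 0 < Kc := by positivity
  set B : ℝ → ℝ := fun r => (ε * w.normSq / (((N:ℝ)) - 2)) * r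
      + (M' * R * Kc) * Set.indicator (Set.Ioo (0:ℝ) t₀) id r with hBdef
  -- pointwise bound
  have hpt : ∀ r ∈ Set.Ioo (0:ℝ) R, r ^ (N - 1) * Φ r (w.u r) ≤ B r := by
    intro r hr
    have hrI : r ∈ Set.Icc (0:ℝ) R := ⟨hr.1.le, hr.2.le⟩
    have huR : |w.u r| ≤ R := abs_u_le_R w hK hr
    have hrpow : (0:ℝ) < r ^ (N - 2) := pow_pos hr.1 _
    have hXpos : (0:ℝ) < (((N:ℝ)) - 2) * r ^ (N - 2) := by positivity
    have hsplit : r ^ (N - 1) = r ^ (N - 2) * r := by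
      rw [← pow_succ]
      congr 1
      omega
    by_cases hcase : w.normSq ≤ δ ^ 2 * ((((N:ℝ)) - 2) * r ^ (N - 2))
    · -- good region
      have huδ : |w.u r| ≤ δ := by
        have h1 := abs_u_le_c hN w hK hr (c := w.normSq / δ) (by positivity)
        have e1 : w.normSq / (2 * (w.normSq / δ)) = δ / 2 := by
          field_simp
        have e2 : (w.normSq / δ) / (2 * ((((N:ℝ)) - 2) * r ^ (N - 2))) ≤ δ / 2 := by
          rw [div_le_div_iff₀ (by positivity) two_pos]
          calc w.normSq / δ * 2 = 2 * w.normSq / δ := by ring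
            _ ≤ 2 * (δ ^ 2 * ((((N:ℝ)) - 2) * r ^ (N - 2))) / δ := by gcongr
            _ = δ * (2 * ((((N:ℝ)) - 2) * r ^ (N - 2))) := by
                field_simp
        calc |w.u r| ≤ w.normSq / (2 * (w.normSq / δ))
              + (w.normSq / δ) / (2 * ((((N:ℝ)) - 2) * r ^ (N - 2))) := h1
          _ ≤ δ / 2 + δ / 2 := by rw [e1]; exact add_le_add le_rfl e2
          _ = δ := by ring
      have husq : w.u r ^ 2 ≤ w.normSq / ((((N:ℝ)) - 2) * r ^ (N - 2)) := by
        set sq1 : ℝ := Real.sqrt w.normSq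
        set x : ℝ := Real.sqrt ((((N:ℝ)) - 2) * r ^ (N - 2)) with hxdef
        have hx : 0 < x := Real.sqrt_pos.mpr hXpos
        have hs2 : sq1 ^ 2 = w.normSq := Real.sq_sqrt hnorm.le
        have hx2 : x ^ 2 = (((N:ℝ)) - 2) * r ^ (N - 2) := Real.sq_sqrt hXpos.le
        have h2 := abs_u_le_c hN w hK hr (c := sq1 * x) (by positivity)
        have e3 : w.normSq / (2 * (sq1 * x))
            + (sq1 * x) / (2 * ((((N:ℝ)) - 2) * r ^ (N - 2))) = sq1 / x := by
          rw [← hs2, ← hx2]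
          field_simp
          ring
        rw [e3] at h2
        have h4 : w.u r ^ 2 ≤ (sq1 / x) ^ 2 := by
          rw [← sq_abs]
          exact pow_le_pow_left₀ (abs_nonneg _) h2 2
        calc w.u r ^ 2 ≤ (sq1 / x) ^ 2 := h4
          _ = w.normSq / ((((N:ℝ)) - 2) * r ^ (N - 2)) := by
              rw [div_pow, hs2, hx2]
      have hmain : r ^ (N - 1) * Φ r (w.u r) ≤ (ε * w.normSq / (((N:ℝ)) - 2)) * r := by
        calc r ^ (N - 1) * Φ r (w.u r) ≤ r ^ (N - 1) * (ε * w.u r ^ 2) := by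
              refine mul_le_mul_of_nonneg_left ?_ (pow_nonneg hr.1.le _)
              exact (le_abs_self _).trans (H2 r hrI _ huR huδ)
          _ ≤ r ^ (N - 1) * (ε * (w.normSq / ((((N:ℝ)) - 2) * r ^ (N - 2)))) := by
              refine mul_le_mul_of_nonneg_left ?_ (pow_nonneg hr.1.le _)
              exact mul_le_mul_of_nonneg_left husq hε.le
          _ = (ε * w.normSq / (((N:ℝ)) - 2)) * r := by
              rw [hsplit]
              field_simp
      refine hmain.trans ?_
      rw [hBdef]
      simp only []
      have : (0:ℝ) ≤ (M' * R * Kc) * Set.indicator (Set.Ioo (0:ℝ) t₀) id r := by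
        refine mul_nonneg (by positivity) ?_
        refine Set.indicator_nonneg (fun y hy => hy.1.le) r
      linarith
    · -- bad region
      push_neg at hcase
      have hrK : r ^ (N - 2) < Kc := by
        rw [hKcdef, lt_div_iff₀ (by positivity)]
        calc r ^ (N - 2) * (δ ^ 2 * (((N:ℝ)) - 2))
            = δ ^ 2 * ((((N:ℝ)) - 2) * r ^ (N - 2)) := by ring
          _ < w.normSq := hcase
      have hrt₀ : r < t₀ := by
        by_contra hcon
        push_neg at hcon
        have : t₀ ^ (N - 2) ≤ r ^ (N - 2) := pow_le_pow_left₀ ht₀.le hcon _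
        have : δ ^ 2 * (((N:ℝ)) - 2) * t₀ ^ (N - 2)
            ≤ δ ^ 2 * ((((N:ℝ)) - 2) * r ^ (N - 2)) := by
          calc δ ^ 2 * (((N:ℝ)) - 2) * t₀ ^ (N - 2)
              ≤ δ ^ 2 * (((N:ℝ)) - 2) * r ^ (N - 2) := by gcongr
            _ = δ ^ 2 * ((((N:ℝ)) - 2) * r ^ (N - 2)) := by ring
        linarith [hKbound, hcase]
      have hind : Set.indicator (Set.Ioo (0:ℝ) t₀) id r = r :=
        Set.indicator_of_mem (show r ∈ Set.Ioo (0:ℝ) t₀ from ⟨hr.1, hrt₀⟩) id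
      have hmain : r ^ (N - 1) * Φ r (w.u r) ≤ (M' * R * Kc) * r := by
        calc r ^ (N - 1) * Φ r (w.u r) ≤ r ^ (N - 1) * (M' * R) := by
              refine mul_le_mul_of_nonneg_left ?_ (pow_nonneg hr.1.le _)
              exact (le_abs_self _).trans (H1 r hrI _ huR)
          _ = r ^ (N - 2) * r * (M' * R) := by rw [hsplit]
          _ ≤ Kc * r * (M' * R) := by
              refine mul_le_mul_of_nonneg_right ?_ (by positivity)
              exact mul_le_mul_of_nonneg_right hrK.le hr.1.le
          _ = (M' * R * Kc) * r := by ring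
      refine hmain.trans ?_
      rw [hBdef]
      simp only [hind]
      have hεr : (0:ℝ) ≤ (ε * w.normSq / (((N:ℝ)) - 2)) * r :=
        mul_nonneg (by positivity) hr.1.le
      linarith
  -- integrability of B
  have hint1 : MeasureTheory.IntegrableOn
      (fun r => (ε * w.normSq / (((N:ℝ)) - 2)) * r) (Set.Ioo (0:ℝ) R) := by
    refine ((ContinuousOn.integrableOn_Icc ?_).mono_set Set.Ioo_subset_Icc_self)
    exact (continuous_const.mul continuous_id).continuousOn
  have hint2 : MeasureTheory.IntegrableOn
      (fun r => (M' * R * Kc) * Set.indicator (Set.Ioo (0:ℝ) t₀) id r)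
      (Set.Ioo (0:ℝ) R) := by
    refine MeasureTheory.Integrable.const_mul ?_ _
    refine MeasureTheory.Integrable.integrableOn ?_
    rw [MeasureTheory.integrable_indicator_iff measurableSet_Ioo]
    exact ((ContinuousOn.integrableOn_Icc continuous_id.continuousOn).mono_set
      Set.Ioo_subset_Icc_self)
  have hBint : MeasureTheory.IntegrableOn B (Set.Ioo (0:ℝ) R) := hint1.add hint2
  -- main integral estimate
  have hle : (∫ r in Set.Ioo (0:ℝ) R, r ^ (N - 1) * Φ r (w.u r))
      ≤ ∫ r in Set.Ioo (0:ℝ) R, B r := by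
    by_cases hInt : MeasureTheory.IntegrableOn
        (fun r => r ^ (N - 1) * Φ r (w.u r)) (Set.Ioo (0:ℝ) R)
    · exact MeasureTheory.setIntegral_mono_on hInt hBint measurableSet_Ioo hpt
    · rw [MeasureTheory.integral_undef hInt]
      refine MeasureTheory.setIntegral_nonneg measurableSet_Ioo fun r hr => ?_
      have hind : (0:ℝ) ≤ Set.indicator (Set.Ioo (0:ℝ) t₀) id r :=
        Set.indicator_nonneg (fun y hy => hy.1.le) r
      have h1 : (0:ℝ) ≤ (ε * w.normSq / (((N:ℝ)) - 2)) * r :=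
        mul_nonneg (by positivity) hr.1.le
      exact add_nonneg h1 (mul_nonneg (by positivity) hind)
  refine hle.trans ?_
  -- compute ∫ B
  have hsum : (∫ r in Set.Ioo (0:ℝ) R, B r)
      = (ε * w.normSq / (((N:ℝ)) - 2)) * (R ^ 2 / 2)
        + (M' * R * Kc) * ((min R t₀) ^ 2 / 2) := by
    rw [hBdef, MeasureTheory.integral_add hint1 hint2,
      MeasureTheory.integral_const_mul, MeasureTheory.integral_const_mul]
    congr 1
    · rw [integral_Ioo_id hR.le]
    · congr 1
      rw [MeasureTheory.setIntegral_indicator measurableSet_Ioo]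
      have : Set.Ioo (0:ℝ) R ∩ Set.Ioo (0:ℝ) t₀ = Set.Ioo (0:ℝ) (min R t₀) := by
        rw [Set.Ioo_inter_Ioo]
        simp
      rw [this]
      exact integral_Ioo_id (le_min hR.le ht₀.le)
  rw [hsum]
  have hterm1 : (ε * w.normSq / (((N:ℝ)) - 2)) * (R ^ 2 / 2) = w.normSq / 16 := by
    rw [hεdef]
    field_simp
    ring
  have hterm2 : (M' * R * Kc) * ((min R t₀) ^ 2 / 2) ≤ w.normSq / 16 := by
    have hmin : (min R t₀) ^ 2 ≤ t₀ ^ 2 := by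
      refine pow_le_pow_left₀ (le_min hR.le ht₀.le) (min_le_right _ _) 2
    calc (M' * R * Kc) * ((min R t₀) ^ 2 / 2) ≤ (M' * R * Kc) * (t₀ ^ 2 / 2) := by gcongr
      _ = w.normSq / 16 := by
        rw [ht₀sq, hKcdef]
        field_simp
        ring
  linarith

lemma rpow_aux {x q : ℝ} (hq0 : 0 < q) (hq2 : q ≤ 2) (hx : 0 ≤ x) (hxR : x ≤ R) :
    x ^ q ≤ max 1 (R ^ 2) := by
  rcases le_or_gt x 1 with h | h
  · exact (Real.rpow_le_one hx h hq0.le).trans (le_max_left _ _)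
  · have h1 : x ^ q ≤ x ^ (2:ℝ) := Real.rpow_le_rpow_of_exponent_le h.le hq2
    have h2 : x ^ (2:ℝ) = x ^ (2:ℕ) := by
      rw [← Real.rpow_natCast x 2]
      norm_num
    refine h1.trans ?_
    rw [h2]
    refine le_trans ?_ (le_max_right _ _)
    exact pow_le_pow_left₀ hx hxR 2

lemma Q_bound {b : ℝ → ℝ} {b₁ q : ℝ} (hR : 0 < R) (hq0 : 0 < q) (hq2 : q ≤ 2)
    (hb : ∀ r ∈ Set.Icc (0:ℝ) R, 0 ≤ b r ∧ b r ≤ b₁) (hb₁ : 0 ≤ b₁)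
    (v : ℝ → ℝ) (hv : ∀ r ∈ Set.Ioo (0:ℝ) R, 0 ≤ v r ∧ v r ≤ R) :
    (0 ≤ ∫ r in Set.Ioo (0:ℝ) R, r ^ (N - 1) * b r * |v r| ^ q) ∧
    (∫ r in Set.Ioo (0:ℝ) R, r ^ (N - 1) * b r * |v r| ^ q)
      ≤ R * (R ^ (N - 1) * b₁ * max 1 (R ^ 2)) := by
  have hptnn : ∀ r ∈ Set.Ioo (0:ℝ) R, 0 ≤ r ^ (N - 1) * b r * |v r| ^ q := by
    intro r hr
    have h1 : (0:ℝ) ≤ r ^ (N - 1) := pow_nonneg hr.1.le _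
    have h2 := (hb r ⟨hr.1.le, hr.2.le⟩).1
    have h3 : (0:ℝ) ≤ |v r| ^ q := Real.rpow_nonneg (abs_nonneg _) _
    positivity
  have hptub : ∀ r ∈ Set.Ioo (0:ℝ) R,
      r ^ (N - 1) * b r * |v r| ^ q ≤ R ^ (N - 1) * b₁ * max 1 (R ^ 2) := by
    intro r hr
    have h1 : r ^ (N - 1) ≤ R ^ (N - 1) := pow_le_pow_left₀ hr.1.le hr.2.le _
    have h2 := hb r ⟨hr.1.le, hr.2.le⟩
    have hvr := hv r hr
    have h3 : |v r| ^ q ≤ max 1 (R ^ 2) := by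
      rw [abs_of_nonneg hvr.1]
      exact rpow_aux hq0 hq2 hvr.1 hvr.2
    have h4 : (0:ℝ) ≤ |v r| ^ q := Real.rpow_nonneg (abs_nonneg _) _
    have h5 : (0:ℝ) ≤ r ^ (N - 1) := pow_nonneg hr.1.le _
    calc r ^ (N - 1) * b r * |v r| ^ q ≤ R ^ (N - 1) * b₁ * |v r| ^ q := by
          refine mul_le_mul_of_nonneg_right ?_ h4
          exact mul_le_mul h1 h2.2 h2.1 (by positivity)
      _ ≤ R ^ (N - 1) * b₁ * max 1 (R ^ 2) :=
          mul_le_mul_of_nonneg_left h3 (by positivity)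
  by_cases hInt : MeasureTheory.IntegrableOn
      (fun r => r ^ (N - 1) * b r * |v r| ^ q) (Set.Ioo (0:ℝ) R)
  · constructor
    · exact MeasureTheory.setIntegral_nonneg measurableSet_Ioo hptnn
    · have h := MeasureTheory.setIntegral_mono_on hInt
        (MeasureTheory.integrableOn_const measure_Ioo_lt_top.ne)
        measurableSet_Ioo hptub
      refine h.trans ?_
      rw [MeasureTheory.setIntegral_const, smul_eq_mul, Real.volume_real_Ioo, sub_zero,
        max_eq_left hR.le]
  · rw [MeasureTheory.integral_undef hInt]
    exact ⟨le_refl 0, by positivity⟩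

section FintBounds

variable {f : ℝ → ℝ → ℝ}

lemma Fint_plus_H1 {M₀ : ℝ} (hR : 0 < R) (hM0 : 0 ≤ M₀)
    (hM : ∀ r ∈ Set.Icc (0:ℝ) R, ∀ t ∈ Set.Icc (-R) R, |f r t| ≤ M₀) :
    ∀ r ∈ Set.Icc (0:ℝ) R, ∀ s : ℝ, |s| ≤ R → |Fint (fplus R f) r s| ≤ (M₀ + 1) * R := by
  intro r hr s hs
  have hfin : |Fint (fplus R f) r s| ≤ M₀ * R := by
    rcases le_or_gt s 0 with h0 | h0
    · rw [Fint_plus_nonpos h0]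
      simpa using mul_nonneg hM0 hR.le
    · rw [Fint_plus_eq h0.le (abs_le.mp hs).2]
      exact abs_intf_le_const hM0 hR (hM r hr) hs
  nlinarith
lemma Fint_plus_H2 {ε δ : ℝ} (hε : 0 ≤ ε) (hδR : δ ≤ R)
    (hf2 : ∀ r ∈ Set.Icc (0:ℝ) R, ∀ t : ℝ, t ≠ 0 → |t| < δ → |f r t| ≤ ε * |t|) :
    ∀ r ∈ Set.Icc (0:ℝ) R, ∀ s : ℝ, |s| ≤ δ → |Fint (fplus R f) r s| ≤ ε * s ^ 2 := by
  intro r hr s hs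
  rcases le_or_gt s 0 with h0 | h0
  · rw [Fint_plus_nonpos h0]
    simpa using mul_nonneg hε (sq_nonneg s)
  · rw [Fint_plus_eq h0.le ((abs_le.mp hs).2.trans hδR)]
    exact abs_intf_le_sq hε (hf2 r hr) hs

lemma Fint_minus_H1 {M₀ : ℝ} (hR : 0 < R) (hM0 : 0 ≤ M₀)
    (hM : ∀ r ∈ Set.Icc (0:ℝ) R, ∀ t ∈ Set.Icc (-R) R, |f r t| ≤ M₀) :
    ∀ r ∈ Set.Icc (0:ℝ) R, ∀ s : ℝ, |s| ≤ R → |Fint (fminus R f) r s| ≤ (M₀ + 1) * R := by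
  intro r hr s hs
  have hfin : |Fint (fminus R f) r s| ≤ M₀ * R := by
    rcases le_or_gt 0 s with h0 | h0
    · rw [Fint_minus_nonneg h0]
      simpa using mul_nonneg hM0 hR.le
    · rw [Fint_minus_eq h0.le (abs_le.mp hs).1]
      exact abs_intf_le_const hM0 hR (hM r hr) hs
  nlinarith
lemma Fint_minus_H2 {ε δ : ℝ} (hε : 0 ≤ ε) (hδR : δ ≤ R)
    (hf2 : ∀ r ∈ Set.Icc (0:ℝ) R, ∀ t : ℝ, t ≠ 0 → |t| < δ → |f r t| ≤ ε * |t|) :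
    ∀ r ∈ Set.Icc (0:ℝ) R, ∀ s : ℝ, |s| ≤ δ → |Fint (fminus R f) r s| ≤ ε * s ^ 2 := by
  intro r hr s hs
  rcases le_or_gt 0 s with h0 | h0
  · rw [Fint_minus_nonneg h0]
    simpa using mul_nonneg hε (sq_nonneg s)
  · rw [Fint_minus_eq h0.le (neg_le_of_abs_le (hs.trans hδR))]
    exact abs_intf_le_sq hε (hf2 r hr) hs

end FintBounds

end MPGaux

open MPGaux

/-- Mountain pass geometry: the functionals `I_λ^±` are bounded below by positive constants
on the annulus `ρ₋(λ,R) ≤ ‖u‖ ≤ ρ₊(R)`, and `ρ₋(λ,R) → 0` as `λ → 0⁺`. -/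
theorem mountain_pass_geometry
    (N : ℕ) (hN : 3 ≤ N) (R : ℝ) (hR : 0 < R) (q : ℝ) (hq1 : 1 < q) (hq2 : q < 2)
    (f : ℝ → ℝ → ℝ) (b : ℝ → ℝ)
    (hF1 : hypF1 R f) (hF2 : hypF2 R f) (hF3 : hypF3 R f) (hB : hypB R b) :
    ∃ lamStar : ℝ, 0 < lamStar ∧ ∃ ρp : ℝ, 0 < ρp ∧ ∃ ρm : ℝ → ℝ,
      (∀ lam : ℝ, 0 < lam → lam < lamStar →
        (∀ w : SpaceA N R, w.inK → Real.sqrt w.normSq = ρp →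
          ρp ^ 2 / 8 ≤ IlamPlus q lam b f w ∧ ρp ^ 2 / 8 ≤ IlamMinus q lam b f w) ∧
        0 < ρm lam ∧ ρm lam < ρp ∧
        (∀ w : SpaceA N R, w.inK → ρm lam ≤ Real.sqrt w.normSq →
          Real.sqrt w.normSq ≤ ρp →
          ρm lam ^ 2 / 8 ≤ IlamPlus q lam b f w ∧
          ρm lam ^ 2 / 8 ≤ IlamMinus q lam b f w)) ∧
      Filter.Tendsto ρm (nhdsWithin 0 (Set.Ioi 0)) (nhds 0) := by
  classical
  obtain ⟨hbc, b₀, b₁, hb₀, hb⟩ := hB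
  have hN2 : (0:ℝ) < (N:ℝ) - 2 := by
    have : (3:ℝ) ≤ (N:ℝ) := by exact_mod_cast hN
    linarith
  have hb₁pos : 0 < b₁ := lt_of_lt_of_le hb₀ (le_trans (hb 0 ⟨le_rfl, hR.le⟩).1 (hb 0 ⟨le_rfl, hR.le⟩).2)
  have hb' : ∀ r ∈ Set.Icc (0:ℝ) R, 0 ≤ b r ∧ b r ≤ b₁ := fun r hr =>
    ⟨hb₀.le.trans (hb r hr).1, (hb r hr).2⟩
  -- sup bound for f
  obtain ⟨C, hC⟩ := (isCompact_Icc.prod isCompact_Icc).exists_bound_of_continuousOn hF1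
  set M₀ : ℝ := max C 0 with hM₀def
  have hM0 : 0 ≤ M₀ := le_max_right _ _
  have hM : ∀ r ∈ Set.Icc (0:ℝ) R, ∀ t ∈ Set.Icc (-R) R, |f r t| ≤ M₀ := by
    intro r hr t ht
    have := hC (r, t) ⟨hr, ht⟩
    rw [Real.norm_eq_abs] at this
    exact this.trans (le_max_left _ _)
  set M' : ℝ := M₀ + 1 with hM'def
  have hM' : 0 < M' := by positivity
  set ε : ℝ := ((N:ℝ) - 2) / (8 * R ^ 2) with hεdef
  have hεpos : 0 < ε := by positivity
  obtain ⟨δ₀, hδ₀, hf2⟩ := hF2 ε hεpos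
  set δ : ℝ := min δ₀ R with hδdef
  have hδ : 0 < δ := lt_min hδ₀ hR
  have hδR : δ ≤ R := min_le_right _ _
  have hf2' : ∀ r ∈ Set.Icc (0:ℝ) R, ∀ t : ℝ, t ≠ 0 → |t| < δ → |f r t| ≤ ε * |t| := by
    intro r hr t ht0 htδ
    have h := hf2 r hr t ht0 (htδ.trans_le (min_le_left _ _))
    rw [abs_div, div_lt_iff₀ (abs_pos.mpr ht0)] at h
    linarith [h]
  set t₀ : ℝ := Real.sqrt (δ ^ 2 * ((N:ℝ) - 2) / (8 * M' * R)) with ht₀def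
  have ht₀ : 0 < t₀ := Real.sqrt_pos.mpr (by positivity)
  set ρp : ℝ := Real.sqrt (δ ^ 2 * ((N:ℝ) - 2) * t₀ ^ (N - 2)) with hρpdef
  have hρp : 0 < ρp := Real.sqrt_pos.mpr (by positivity)
  set C₁ : ℝ := R * (R ^ (N - 1) * b₁ * max 1 (R ^ 2)) with hC₁def
  have hC₁ : 0 < C₁ := by
    have h1 : (0:ℝ) < max 1 (R ^ 2) := lt_of_lt_of_le one_pos (le_max_left _ _)
    positivity
  set lamStar : ℝ := ρp ^ 2 / (4 * C₁) with hlsdef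
  have hlamStar : 0 < lamStar := by positivity
  refine ⟨lamStar, hlamStar, ρp, hρp, fun lam => Real.sqrt (4 * C₁ * lam), ?_, ?_⟩
  · intro lam hlam hlamlt
    -- core estimate
    have core : ∀ w : SpaceA N R, w.inK → 0 < Real.sqrt w.normSq →
        Real.sqrt w.normSq ≤ ρp →
        3 / 8 * w.normSq - lam * C₁ ≤ IlamPlus q lam b f w ∧
        3 / 8 * w.normSq - lam * C₁ ≤ IlamMinus q lam b f w := by
      intro w hK hρpos hρle
      have hpsi := psiR_ge w hK
      -- q-term bounds
      have hQp := Q_bound (N := N) (b := b) (b₁ := b₁) (q := q) hR (by linarith) hq2.le hb' hb₁pos.le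
        (fun r => max (w.u r) 0) (fun r hr => ⟨le_max_right _ _,
          max_le ((le_abs_self _).trans (abs_u_le_R w hK hr)) hR.le⟩)
      have hQm := Q_bound (N := N) (b := b) (b₁ := b₁) (q := q) hR (by linarith) hq2.le hb' hb₁pos.le
        (fun r => max (-w.u r) 0) (fun r hr => ⟨le_max_right _ _,
          max_le ((neg_le_abs _).trans (abs_u_le_R w hK hr)) hR.le⟩)
      -- F-term bounds
      have hH1p := Fint_plus_H1 (f := f) hR hM0 hM
      have hH1m := Fint_minus_H1 (f := f) hR hM0 hM
      rw [← hM'def] at hH1p hH1m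
      have hH2p := Fint_plus_H2 (f := f) hεpos.le hδR hf2'
      have hH2m := Fint_minus_H2 (f := f) hεpos.le hδR hf2'
      have hH2p' : ∀ r ∈ Set.Icc (0:ℝ) R, ∀ s : ℝ, |s| ≤ R → |s| ≤ δ →
          |Fint (fplus R f) r s| ≤ (((N:ℝ)) - 2) / (8 * R ^ 2) * s ^ 2 :=
        fun r hr s _ hsδ => hH2p r hr s hsδ
      have hH2m' : ∀ r ∈ Set.Icc (0:ℝ) R, ∀ s : ℝ, |s| ≤ R → |s| ≤ δ →
          |Fint (fminus R f) r s| ≤ (((N:ℝ)) - 2) / (8 * R ^ 2) * s ^ 2 :=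
        fun r hr s _ hsδ => hH2m r hr s hsδ
      have hFTp := FT_bound hN hR hM' hδ hH1p hH2p' w hK hρpos hρle
      have hFTm := FT_bound hN hR hM' hδ hH1m hH2m' w hK hρpos hρle
      have hqpos : (0:ℝ) < q := by linarith
      constructor
      · rw [IlamPlus]
        have hQle : (lam / q) * (∫ r in Set.Ioo (0:ℝ) R,
            r ^ (N - 1) * b r * |max (w.u r) 0| ^ q) ≤ lam * C₁ := by
          calc (lam / q) * (∫ r in Set.Ioo (0:ℝ) R,
              r ^ (N - 1) * b r * |max (w.u r) 0| ^ q)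
              ≤ lam * (∫ r in Set.Ioo (0:ℝ) R,
                r ^ (N - 1) * b r * |max (w.u r) 0| ^ q) :=
              mul_le_mul_of_nonneg_right (div_le_self hlam.le hq1.le) hQp.1
            _ ≤ lam * C₁ := mul_le_mul_of_nonneg_left hQp.2 hlam.le
        linarith [hpsi, hFTp, hQle]
      · rw [IlamMinus]
        have hQle : (lam / q) * (∫ r in Set.Ioo (0:ℝ) R,
            r ^ (N - 1) * b r * |max (-w.u r) 0| ^ q) ≤ lam * C₁ := by
          calc (lam / q) * (∫ r in Set.Ioo (0:ℝ) R,
              r ^ (N - 1) * b r * |max (-w.u r) 0| ^ q)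
              ≤ lam * (∫ r in Set.Ioo (0:ℝ) R,
                r ^ (N - 1) * b r * |max (-w.u r) 0| ^ q) :=
              mul_le_mul_of_nonneg_right (div_le_self hlam.le hq1.le) hQm.1
            _ ≤ lam * C₁ := mul_le_mul_of_nonneg_left hQm.2 hlam.le
        linarith [hpsi, hFTm, hQle]
    constructor
    · intro w hK hwρ
      have hρpos : 0 < Real.sqrt w.normSq := by rw [hwρ]; exact hρp
      have hnormeq : w.normSq = ρp ^ 2 := by
        rw [← hwρ, Real.sq_sqrt (normSq_nonneg w)]
      obtain ⟨h1, h2⟩ := core w hK hρpos hwρ.le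
      have hlC : lam * C₁ < ρp ^ 2 / 4 := by
        rw [hlsdef] at hlamlt
        calc lam * C₁ < (ρp ^ 2 / (4 * C₁)) * C₁ := by
              exact mul_lt_mul_of_pos_right hlamlt hC₁
          _ = ρp ^ 2 / 4 := by field_simp
      rw [hnormeq] at h1 h2
      exact ⟨by linarith, by linarith⟩
    · have hρm : 0 < Real.sqrt (4 * C₁ * lam) := Real.sqrt_pos.mpr (by positivity)
      have hρmsq : Real.sqrt (4 * C₁ * lam) ^ 2 = 4 * C₁ * lam :=
        Real.sq_sqrt (by positivity)
      have hρmlt : Real.sqrt (4 * C₁ * lam) < ρp := by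
        have h1 : 4 * C₁ * lam < ρp ^ 2 := by
          rw [hlsdef] at hlamlt
          calc 4 * C₁ * lam < 4 * C₁ * (ρp ^ 2 / (4 * C₁)) := by
                exact mul_lt_mul_of_pos_left hlamlt (by positivity)
            _ = ρp ^ 2 := by field_simp
        calc Real.sqrt (4 * C₁ * lam) < Real.sqrt (ρp ^ 2) :=
              Real.sqrt_lt_sqrt (by positivity) h1
          _ = ρp := Real.sqrt_sq hρp.le
      refine ⟨hρm, hρmlt, ?_⟩
      intro w hK hwlo hwhi
      have hρpos : 0 < Real.sqrt w.normSq := lt_of_lt_of_le hρm hwlo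
      obtain ⟨h1, h2⟩ := core w hK hρpos hwhi
      have hlower : 4 * C₁ * lam ≤ w.normSq := by
        have := pow_le_pow_left₀ hρm.le hwlo 2
        rwa [hρmsq, Real.sq_sqrt (normSq_nonneg w)] at this
      constructor
      · have : Real.sqrt (4 * C₁ * lam) ^ 2 / 8 = 4 * C₁ * lam / 8 := by rw [hρmsq]
        rw [this]
        linarith
      · have : Real.sqrt (4 * C₁ * lam) ^ 2 / 8 = 4 * C₁ * lam / 8 := by rw [hρmsq]
        rw [this]
        linarith
  · have h1 : Filter.Tendsto (fun lam : ℝ => 4 * C₁ * lam)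
        (nhdsWithin 0 (Set.Ioi 0)) (nhds 0) := by
      have h : Filter.Tendsto (fun lam : ℝ => 4 * C₁ * lam) (nhds 0) (nhds (4 * C₁ * 0)) :=
        (continuous_const.mul continuous_id).tendsto 0
      rw [mul_zero] at h
      exact h.mono_left nhdsWithin_le_nhds
    have h2 := (Real.continuous_sqrt.tendsto (0:ℝ)).comp h1
    rw [Real.sqrt_zero] at h2
    simpa [Function.comp_def] using h2
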